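/- arXiv:0709.2196 — 5 statements merged into one kernel-verified Lean document; each statement's English description precedes it below -/
import Mathlib

section
/- If F is three times continuously differentiable on X and D_F is symmetric (D_F(p||q) = D_F(q||p) for all p, q ∈ X), then the Hessian ∇²F is constant on X. -/
open scoped RealInnerProductSpace

/-- If `F` is `C³` on `X` and its Bregman divergence is symmetric, then the Hessian
of `F` (the Fréchet derivative of the gradient) is constant on `X`. -/
theorem constant_hessian_of_bregman_symm {d : ℕ}
    (X : Set (EuclideanSpace ℝ (Fin d))) (hXopen : IsOpen X) (hXconv : Convex ℝ X)
    (F : EuclideanSpace ℝ (Fin d) → ℝ)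
    (gradF : EuclideanSpace ℝ (Fin d) → EuclideanSpace ℝ (Fin d))
    (hF : StrictConvexOn ℝ X F)
    (hF3 : ContDiffOn ℝ 3 F X)
    (hgrad : ∀ x ∈ X, HasGradientAt F (gradF x) x)
    (hsymm : ∀ p ∈ X, ∀ q ∈ X,
      F p - F q - ⟪gradF q, p - q⟫ = F q - F p - ⟪gradF p, q - p⟫) :
    ∀ p ∈ X, ∀ q ∈ X, fderiv ℝ gradF p = fderiv ℝ gradF q := by
  -- `gradF` is differentiable on `X`.
  have hfderiv : ∀ x ∈ X, fderiv ℝ F x = InnerProductSpace.toDual ℝ (EuclideanSpace ℝ (Fin d)) (gradF x) :=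
    fun x hx => (hgrad x hx).hasFDerivAt.fderiv
  have hC2 : ContDiffOn ℝ 2 (fderiv ℝ F) X := hF3.fderiv_of_isOpen (m := 2) hXopen (by norm_num)
  have hgradC2 : ContDiffOn ℝ 2 gradF X := by
    have h := (InnerProductSpace.toDual ℝ (EuclideanSpace ℝ (Fin d))).symm.contDiff.comp_contDiffOn hC2
    exact h.congr (fun x hx => by
      simp only [Function.comp, hfderiv x hx, LinearIsometryEquiv.symm_apply_apply])
  have hdiff : ∀ x ∈ X, DifferentiableAt ℝ gradF x := fun x hx =>
    (hgradC2.contDiffAt (hXopen.mem_nhds hx)).differentiableAt (by norm_num)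
  -- Key identity: `gradF p - gradF q = (fderiv gradF p)ᵀ (p - q)`.
  have key : ∀ p ∈ X, ∀ q ∈ X,
      gradF p - gradF q = ContinuousLinearMap.adjoint (fderiv ℝ gradF p) (p - q) := by
    intro p hp q hq
    set φ : EuclideanSpace ℝ (Fin d) → ℝ := fun x => 2 * F x - ⟪gradF x, x - q⟫ - ⟪gradF q, x - q⟫ with hφdef
    have hφconst : ∀ x ∈ X, φ x = 2 * F q := by
      intro x hx
      have h := hsymm x hx q hq
      have h2 : ⟪gradF x, q - x⟫ = -⟪gradF x, x - q⟫ := by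
        rw [← inner_neg_right, neg_sub]
      simp only [hφdef]
      linarith [h, h2]
    have h1 : HasFDerivAt F (InnerProductSpace.toDual ℝ (EuclideanSpace ℝ (Fin d)) (gradF p)) p :=
      (hgrad p hp).hasFDerivAt
    have h2 : HasFDerivAt gradF (fderiv ℝ gradF p) p := (hdiff p hp).hasFDerivAt
    have h3 : HasFDerivAt (fun x : EuclideanSpace ℝ (Fin d) => x - q) (ContinuousLinearMap.id ℝ (EuclideanSpace ℝ (Fin d))) p :=
      (hasFDerivAt_id p).sub_const q
    have hi1 := h2.inner ℝ h3
    have hi2 := (hasFDerivAt_const (gradF q) p).inner ℝ h3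
    have hφ' := ((h1.const_mul (2:ℝ)).sub hi1).sub hi2
    have hconst : HasFDerivAt φ (0 : EuclideanSpace ℝ (Fin d) →L[ℝ] ℝ) p := by
      have hev : φ =ᶠ[nhds p] fun _ => 2 * F q :=
        Filter.eventuallyEq_of_mem (hXopen.mem_nhds hp) hφconst
      exact (hasFDerivAt_const (2 * F q) p).congr_of_eventuallyEq hev
    have hD0 := hφ'.unique hconst
    have hDv : ∀ v : EuclideanSpace ℝ (Fin d), ⟪(fderiv ℝ gradF p) v, p - q⟫ = ⟪gradF p - gradF q, v⟫ := by
      intro v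
      have := ContinuousLinearMap.ext_iff.mp hD0 v
      simp only [ContinuousLinearMap.sub_apply, ContinuousLinearMap.smul_apply,
        ContinuousLinearMap.comp_apply, ContinuousLinearMap.prod_apply,
        fderivInnerCLM_apply, ContinuousLinearMap.coe_id', id_eq,
        InnerProductSpace.toDual_apply_apply, ContinuousLinearMap.zero_apply,
        ContinuousLinearMap.map_zero, inner_zero_left, smul_eq_mul] at this
      rw [inner_sub_left]
      linarith [this]
    apply ext_inner_right ℝ
    intro v
    rw [ContinuousLinearMap.adjoint_inner_left, ← hDv v]
    exact real_inner_comm _ _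
  -- For fixed `p`, `gradF` is affine with derivative `(fderiv gradF p)ᵀ` near any `q ∈ X`.
  have haff : ∀ p ∈ X, ∀ q ∈ X,
      fderiv ℝ gradF q = ContinuousLinearMap.adjoint (fderiv ℝ gradF p) := by
    intro p hp q hq
    set A := ContinuousLinearMap.adjoint (fderiv ℝ gradF p) with hA
    have heq : ∀ x ∈ X, gradF x = gradF p + (A x - A p) := by
      intro x hx
      have h := key p hp x hx
      have : A (p - x) = A p - A x := map_sub A p x
      rw [this] at h
      have : gradF x = gradF p - (A p - A x) := by
        rw [← h]; abel
      rw [this]; abel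
    have hev : gradF =ᶠ[nhds q] fun x => gradF p + (A x - A p) :=
      Filter.eventuallyEq_of_mem (hXopen.mem_nhds hq) heq
    have hAe : HasFDerivAt (fun x : EuclideanSpace ℝ (Fin d) => gradF p + (A x - A p)) A q :=
      ((A.hasFDerivAt.sub_const (A p)).const_add (gradF p))
    rw [hev.fderiv_eq, hAe.fderiv]
  intro p hp q hq
  rw [haff p hp q hq]
  exact haff p hp p hp
end

section
/- The first-type Bregman bisector {x ∈ X : D_F(x||p) = D_F(x||q)} is the intersection with X of a hyperplane, namely the set of x satisfying ⟨x, ∇F(p) - ∇F(q)⟩ + F(p) - ⟨p, ∇F(p)⟩ - F(q) + ⟨q, ∇F(q)⟩ = 0; moreover p and q lie strictly on opposite sides of this hyperplane when p ≠ q. -/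
open scoped RealInnerProductSpace

lemma bregman_pos {d : ℕ} {X : Set (EuclideanSpace ℝ (Fin d))}
    (hXconv : Convex ℝ X) {F : EuclideanSpace ℝ (Fin d) → ℝ}
    (hF : StrictConvexOn ℝ X F) {p q : EuclideanSpace ℝ (Fin d)}
    {g : EuclideanSpace ℝ (Fin d)} (hg : HasGradientAt F g q)
    (hp : p ∈ X) (hq : q ∈ X) (hpq : p ≠ q) :
    0 < F p - F q - ⟪g, p - q⟫ := by
  set v := p - q with hv
  have hvne : v ≠ 0 := sub_ne_zero.2 hpq
  set L : ℝ → EuclideanSpace ℝ (Fin d) := fun t => q + t • v with hL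
  set S : Set ℝ := L ⁻¹' X with hS
  have key : ∀ (a b r s : ℝ), r + s = 1 → L (r * a + s * b) = r • L a + s • L b := by
    intro a b r s hrs
    simp only [hL]
    rw [show r • (q + a • v) + s • (q + b • v) = (r + s) • q + (r * a + s * b) • v from by
      module, hrs, one_smul]
  have hSconv : Convex ℝ S := by
    intro a ha b hb r s hr hs hrs
    simp only [hS, Set.mem_preimage, smul_eq_mul, key a b r s hrs]
    exact hXconv ha hb hr hs hrs
  have hGstrict : StrictConvexOn ℝ S (F ∘ L) := by
    refine ⟨hSconv, fun a ha b hb hab r s hr hs hrs => ?_⟩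
    have hcombo : L (r * a + s * b) = r • L a + s • L b := key a b r s hrs
    have hLne : L a ≠ L b := by
      simp only [hL]
      intro h
      apply hab
      have := add_left_cancel h
      exact smul_left_injective ℝ hvne this
    calc (F ∘ L) (r • a + s • b) = F (r • L a + s • L b) := by
          simp only [Function.comp]; rw [← hcombo]; norm_num
      _ < r • F (L a) + s • F (L b) := hF.2 ha hb hLne hr hs hrs
      _ = r • (F ∘ L) a + s • (F ∘ L) b := rfl
  have hderiv : HasDerivAt (F ∘ L) ⟪g, v⟫ 0 := by
    have hfd : HasFDerivAt F ((InnerProductSpace.toDual ℝ _) g : _ →L[ℝ] ℝ) q :=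
      hg.hasFDerivAt
    have hLd : HasDerivAt L v 0 := by
      have : HasDerivAt (fun t : ℝ => t • v) ((1:ℝ) • v) 0 := (hasDerivAt_id 0).smul_const v
      rw [one_smul] at this
      exact this.const_add q
    have hL0 : L 0 = q := by simp [hL]
    rw [← hL0] at hfd
    have := hfd.comp_hasDerivAt (0:ℝ) hLd
    simpa [InnerProductSpace.toDual_apply_apply] using this
  have h0 : (0:ℝ) ∈ S := by simp [hS, hL, hq]
  have h1 : (1:ℝ) ∈ S := by simp [hS, hL, hv, hp]
  have := hGstrict.lt_slope_of_hasDerivAt h0 h1 one_pos hderiv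
  have hFL1 : (F ∘ L) 1 = F p := by simp [hL, hv]
  have hFL0 : (F ∘ L) 0 = F q := by simp [hL]
  rw [slope_def_field, hFL1, hFL0] at this
  simp only [sub_zero, div_one] at this
  rw [hv] at this ⊢
  linarith


/-- The first-type Bregman bisector is (the trace on `X` of) a hyperplane, and
`p`, `q` lie strictly on opposite sides of it. -/
theorem bregman_first_type_bisector {d : ℕ}
    (X : Set (EuclideanSpace ℝ (Fin d))) (hXopen : IsOpen X) (hXconv : Convex ℝ X)
    (F : EuclideanSpace ℝ (Fin d) → ℝ)
    (gradF : EuclideanSpace ℝ (Fin d) → EuclideanSpace ℝ (Fin d))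
    (hF : StrictConvexOn ℝ X F)
    (hgrad : ∀ x ∈ X, HasGradientAt F (gradF x) x)
    (p q : EuclideanSpace ℝ (Fin d)) (hp : p ∈ X) (hq : q ∈ X) (hpq : p ≠ q) :
    {x ∈ X | F x - F p - ⟪gradF p, x - p⟫ = F x - F q - ⟪gradF q, x - q⟫}
      = {x ∈ X | ⟪x, gradF p - gradF q⟫ + F p - ⟪p, gradF p⟫ - F q + ⟪q, gradF q⟫ = 0} ∧
    0 < ⟪p, gradF p - gradF q⟫ + F p - ⟪p, gradF p⟫ - F q + ⟪q, gradF q⟫ ∧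
    ⟪q, gradF p - gradF q⟫ + F p - ⟪p, gradF p⟫ - F q + ⟪q, gradF q⟫ < 0 := by
  have hpos : 0 < F p - F q - ⟪gradF q, p - q⟫ :=
    bregman_pos hXconv hF (hgrad q hq) hp hq hpq
  have hpos' : 0 < F q - F p - ⟪gradF p, q - p⟫ :=
    bregman_pos hXconv hF (hgrad p hp) hq hp hpq.symm
  refine ⟨?_, ?_, ?_⟩
  · ext x
    simp only [Set.mem_setOf_eq]
    constructor <;> rintro ⟨hx, h⟩ <;> refine ⟨hx, ?_⟩ <;>
      simp only [inner_sub_left, inner_sub_right, real_inner_comm x, real_inner_comm (gradF p) p, real_inner_comm (gradF q) q] at h ⊢ <;> linarith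
  · simp only [inner_sub_left, inner_sub_right, real_inner_comm p, real_inner_comm q] at hpos ⊢
    linarith
  · simp only [inner_sub_left, inner_sub_right, real_inner_comm p, real_inner_comm q] at hpos' ⊢
    linarith
end

section
/- Bregman Voronoi diagrams are power diagrams: for sites p₁,…,pₙ in X, a point x satisfies D_F(x||pᵢ) ≤ D_F(x||pⱼ) if and only if ‖x - ∇F(pᵢ)‖² - rᵢ² ≤ ‖x - ∇F(pⱼ)‖² - rⱼ², where rₖ² := ‖∇F(pₖ)‖² + 2(F(pₖ) - ⟨pₖ, ∇F(pₖ)⟩). In particular the first-type Bregman Voronoi cell of pᵢ equals the power-diagram cell of the (possibly imaginary) ball centered at ∇F(pᵢ) with squared radius rᵢ². -/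
open scoped RealInnerProductSpace

/-- Bregman Voronoi diagrams are power diagrams: `D_F(x‖pᵢ) ≤ D_F(x‖pⱼ)` iff the power of
`x` w.r.t. the ball centered at `∇F(pᵢ)` of squared radius
`‖∇F(pᵢ)‖² + 2(F(pᵢ) - ⟨pᵢ, ∇F(pᵢ)⟩)` is at most the power w.r.t. the ball of `pⱼ`;
consequently the first-type Bregman Voronoi cell of `pᵢ` equals the power cell. -/
theorem bregman_voronoi_eq_power_diagram {d n : ℕ}
    (X : Set (EuclideanSpace ℝ (Fin d))) (hXopen : IsOpen X) (hXconv : Convex ℝ X)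
    (F : EuclideanSpace ℝ (Fin d) → ℝ)
    (gradF : EuclideanSpace ℝ (Fin d) → EuclideanSpace ℝ (Fin d))
    (hF : StrictConvexOn ℝ X F)
    (hgrad : ∀ x ∈ X, HasGradientAt F (gradF x) x)
    (p : Fin n → EuclideanSpace ℝ (Fin d)) (hp : ∀ i, p i ∈ X)
    (rsq : Fin n → ℝ)
    (hrsq : ∀ k, rsq k = ‖gradF (p k)‖ ^ 2 + 2 * (F (p k) - ⟪p k, gradF (p k)⟫)) :
    (∀ i j, ∀ x ∈ X,
      (F x - F (p i) - ⟪gradF (p i), x - p i⟫ ≤ F x - F (p j) - ⟪gradF (p j), x - p j⟫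
        ↔ ‖x - gradF (p i)‖ ^ 2 - rsq i ≤ ‖x - gradF (p j)‖ ^ 2 - rsq j)) ∧
    (∀ i, {x ∈ X | ∀ j, F x - F (p i) - ⟪gradF (p i), x - p i⟫
                      ≤ F x - F (p j) - ⟪gradF (p j), x - p j⟫}
        = {x ∈ X | ∀ j, ‖x - gradF (p i)‖ ^ 2 - rsq i ≤ ‖x - gradF (p j)‖ ^ 2 - rsq j}) := by
  have key : ∀ k x, ‖x - gradF (p k)‖ ^ 2 - rsq k
      = 2 * (F x - F (p k) - ⟪gradF (p k), x - p k⟫) + ‖x‖ ^ 2 - 2 * F x := by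
    intro k x
    rw [hrsq, norm_sub_sq_real, inner_sub_right, real_inner_comm (p k), real_inner_comm x]
    ring
  have main : ∀ i j, ∀ x, (F x - F (p i) - ⟪gradF (p i), x - p i⟫ ≤ F x - F (p j) - ⟪gradF (p j), x - p j⟫
        ↔ ‖x - gradF (p i)‖ ^ 2 - rsq i ≤ ‖x - gradF (p j)‖ ^ 2 - rsq j) := by
    intro i j x
    rw [key, key]
    constructor <;> intro h <;> linarith
  refine ⟨fun i j x _ => main i j x, fun i => ?_⟩
  ext x
  simp only [Set.mem_setOf_eq]
  exact and_congr_right fun _ => forall_congr' fun j => main i j x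
end

section
/- k-order reduction to weighted diagram: for a subset S_i of k sites with average divergence D_i(x) = (1/k)·Σ_{p∈S_i} D_F(x||p), one has D_i(x) = D_F(x||c_i) + w_i, where c_i = (∇F)⁻¹((1/k)·Σ_{p∈S_i} ∇F(p)) and w_i = F(c_i) - ⟨c_i, ∇F(c_i)⟩ - (1/k)·Σ_{p∈S_i}(F(p) - ⟨p, ∇F(p)⟩). -/
open scoped RealInnerProductSpace

/-- `k`-order reduction to a weighted diagram: the average Bregman divergence to a set of `k`
sites equals the Bregman divergence to the point `cᵢ` whose gradient is the average of the
site gradients, plus the weight `wᵢ`. -/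
theorem korder_bregman_reduction {d : ℕ}
    (X : Set (EuclideanSpace ℝ (Fin d))) (hXopen : IsOpen X) (hXconv : Convex ℝ X)
    (F : EuclideanSpace ℝ (Fin d) → ℝ)
    (gradF : EuclideanSpace ℝ (Fin d) → EuclideanSpace ℝ (Fin d))
    (hF : StrictConvexOn ℝ X F)
    (hgrad : ∀ x ∈ X, HasGradientAt F (gradF x) x)
    (k : ℕ) (hk : 0 < k)
    (S : Finset (EuclideanSpace ℝ (Fin d))) (hcard : S.card = k) (hS : ↑S ⊆ X)
    (c : EuclideanSpace ℝ (Fin d)) (hc : c ∈ X)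
    (hcavg : gradF c = (k : ℝ)⁻¹ • ∑ p ∈ S, gradF p)
    (w : ℝ)
    (hw : w = F c - ⟪c, gradF c⟫ - (k : ℝ)⁻¹ * ∑ p ∈ S, (F p - ⟪p, gradF p⟫)) :
    ∀ x ∈ X,
      (k : ℝ)⁻¹ * ∑ p ∈ S, (F x - F p - ⟪gradF p, x - p⟫)
        = (F x - F c - ⟪gradF c, x - c⟫) + w := by
  intro x hx
  subst hw
  have hk' : (k : ℝ) ≠ 0 := Nat.cast_ne_zero.mpr hk.ne'
  have h1 : ∑ p ∈ S, ⟪p, gradF p⟫ = ∑ p ∈ S, ⟪gradF p, p⟫ :=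
    Finset.sum_congr rfl fun p _ => real_inner_comm _ _
  have h2 : ⟪c, gradF c⟫ = (k : ℝ)⁻¹ * ∑ p ∈ S, ⟪gradF p, c⟫ := by
    rw [hcavg, real_inner_smul_right, inner_sum]
    congr 1
    exact Finset.sum_congr rfl fun p _ => real_inner_comm _ _
  have h3 : ⟪gradF c, x⟫ = (k : ℝ)⁻¹ * ∑ p ∈ S, ⟪gradF p, x⟫ := by
    rw [hcavg, real_inner_smul_left, sum_inner]
  have h4 : ⟪gradF c, c⟫ = (k : ℝ)⁻¹ * ∑ p ∈ S, ⟪gradF p, c⟫ := by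
    rw [hcavg, real_inner_smul_left, sum_inner]
  simp only [inner_sub_right, Finset.sum_sub_distrib, Finset.sum_const, hcard,
    nsmul_eq_mul, h1, h2, h3, h4, Finset.mul_sum]
  field_simp
  simp only [div_eq_mul_inv, ← Finset.sum_mul]
  field_simp
  ring
end

section
/- The Bregman centroid of a compact domain D with density p coincides with the mass centroid: the unique minimizer over c of ∫_D p(x)·D_F(x||c) dx is c* = (∫_D p(x)·x dx) / (∫_D p(x) dx), independently of the choice of F. -/
open scoped RealInnerProductSpace
open MeasureTheory
open scoped ENNReal NNReal

lemma breg_strict {d : ℕ} {X : Set (EuclideanSpace ℝ (Fin d))} (hXconv : Convex ℝ X)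
    {F : EuclideanSpace ℝ (Fin d) → ℝ} {gradF : EuclideanSpace ℝ (Fin d) → EuclideanSpace ℝ (Fin d)}
    (hF : StrictConvexOn ℝ X F) {c z : EuclideanSpace ℝ (Fin d)} (hc : c ∈ X) (hz : z ∈ X)
    (hgc : HasGradientAt F (gradF c) c) (hne : z ≠ c) :
    F c + ⟪gradF c, z - c⟫ < F z := by
  set v := z - c with hv
  have hv0 : v ≠ 0 := sub_ne_zero.2 hne
  set g : ℝ → ℝ := fun t => F (c + t • v) with hg
  have hmem : ∀ t : ℝ, t ∈ Set.Icc (0:ℝ) 1 → c + t • v ∈ X := by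
    intro t ht
    have : c + t • v = (1 - t) • c + t • z := by
      simp only [hv, smul_sub, sub_smul, one_smul]; abel
    rw [this]
    exact hXconv hc hz (by linarith [ht.2]) ht.1 (by ring)
  have hgsc : StrictConvexOn ℝ (Set.Icc (0:ℝ) 1) g := by
    refine ⟨convex_Icc 0 1, ?_⟩
    intro x hx y hy hxy a b ha hb hab
    have hpq : c + x • v ≠ c + y • v := by
      intro h
      apply hxy
      have : (x - y) • v = 0 := by
        have := add_left_cancel h
        rw [sub_smul, this, sub_self]
      rcases smul_eq_zero.1 this with h' | h'
      · linarith [sub_eq_zero.1 (by linarith [h'] : x - y = 0)]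
      · exact absurd h' hv0
    have key : a • (c + x • v) + b • (c + y • v) = c + (a * x + b * y) • v := by
      have h1 : a • (c + x • v) + b • (c + y • v) = (a + b) • c + (a * x + b * y) • v := by
        simp only [smul_add, smul_smul, add_smul]
        abel
      rw [h1, hab, one_smul]
    have h := hF.2 (hmem x hx) (hmem y hy) hpq ha hb hab
    rw [key] at h
    simpa [hg, smul_eq_mul] using h
  have hd : HasDerivAt g ⟪gradF c, v⟫ 0 := by
    have h1 : HasDerivAt (fun t : ℝ => c + t • v) v 0 := by
      simpa using ((hasDerivAt_id (0:ℝ)).smul_const v).const_add c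
    have h2 : HasFDerivAt F (InnerProductSpace.toDual ℝ _ (gradF c)) c := hgc.hasFDerivAt
    have h2' : HasFDerivAt F (InnerProductSpace.toDual ℝ _ (gradF c)) (c + (0:ℝ) • v) := by
      simpa using h2
    have := h2'.comp_hasDerivAt 0 h1
    simpa [g, Function.comp_def, InnerProductSpace.toDual_apply_apply] using this
  have hslope := hgsc.lt_slope_of_hasDerivAt (Set.left_mem_Icc.2 zero_le_one)
    (Set.right_mem_Icc.2 zero_le_one) zero_lt_one hd
  have hg0 : g 0 = F c := by simp [g]
  have hg1 : g 1 = F z := by simp [g, hv]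
  rw [slope_def_field, hg0, hg1] at hslope
  have : ⟪gradF c, v⟫ < F z - F c := by
    have h10 : (1:ℝ) - 0 = 1 := by norm_num
    rw [h10, div_one] at hslope
    exact hslope
  linarith

set_option maxHeartbeats 1000000 in
/-- The Bregman centroid of a compact convex domain `D` with density `ρ` coincides with the
mass centroid: the unique minimizer over `c ∈ D` of `∫_D ρ(x) D_F(x‖c) dx` is
`c* = (∫_D ρ(x) x dx) / (∫_D ρ(x) dx)`, independently of `F`. -/
theorem bregman_centroid_eq_mass_centroid {d : ℕ}
    (X : Set (EuclideanSpace ℝ (Fin d))) (hXopen : IsOpen X) (hXconv : Convex ℝ X)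
    (F : EuclideanSpace ℝ (Fin d) → ℝ)
    (gradF : EuclideanSpace ℝ (Fin d) → EuclideanSpace ℝ (Fin d))
    (hF : StrictConvexOn ℝ X F)
    (hF2 : ContDiffOn ℝ 2 F X)
    (hgrad : ∀ x ∈ X, HasGradientAt F (gradF x) x)
    (D : Set (EuclideanSpace ℝ (Fin d))) (hDX : D ⊆ X)
    (hDcomp : IsCompact D) (hDconv : Convex ℝ D) (hDne : D.Nonempty)
    (ρ : EuclideanSpace ℝ (Fin d) → ℝ) (hρ : ∀ x, 0 ≤ ρ x)
    (hρint : IntegrableOn ρ D)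
    (hρxint : IntegrableOn (fun x => ρ x • x) D)
    (hmass : 0 < ∫ x in D, ρ x)
    (hDiv : ∀ c ∈ D,
      IntegrableOn (fun x => ρ x * (F x - F c - ⟪gradF c, x - c⟫)) D)
    (cstar : EuclideanSpace ℝ (Fin d))
    (hcstar : cstar = (∫ x in D, ρ x)⁻¹ • ∫ x in D, ρ x • x) :
    cstar ∈ D ∧
    (∀ c ∈ D,
      (∫ x in D, ρ x * (F x - F cstar - ⟪gradF cstar, x - cstar⟫))
        ≤ ∫ x in D, ρ x * (F x - F c - ⟪gradF c, x - c⟫)) ∧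
    (∀ c ∈ D, c ≠ cstar →
      (∫ x in D, ρ x * (F x - F cstar - ⟪gradF cstar, x - cstar⟫))
        < ∫ x in D, ρ x * (F x - F c - ⟪gradF c, x - c⟫)) := by
  have hDmeas : MeasurableSet D := hDcomp.isClosed.measurableSet
  obtain ⟨c₀, hc₀⟩ := hDne
  have hMne : (∫ x in D, ρ x) ≠ 0 := ne_of_gt hmass
  -- integrability of basic pieces
  have hinn : ∀ c : EuclideanSpace ℝ (Fin d),
      IntegrableOn (fun x => ⟪gradF c, ρ x • x⟫) D := by
    intro c
    exact (innerSL ℝ (gradF c)).integrable_comp hρxint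
  have hinnval : ∀ c : EuclideanSpace ℝ (Fin d),
      (∫ x in D, ⟪gradF c, ρ x • x⟫) = ⟪gradF c, ∫ x in D, ρ x • x⟫ := by
    intro c
    exact ((innerSL ℝ (gradF c)).integral_comp_comm hρxint)
  have hexp : ∀ (c : EuclideanSpace ℝ (Fin d)) (x : EuclideanSpace ℝ (Fin d)),
      ρ x * ⟪gradF c, x - c⟫ = ⟪gradF c, ρ x • x⟫ - ⟪gradF c, c⟫ * ρ x := by
    intro c x
    rw [inner_sub_right, real_inner_smul_right]
    ring
  have hG : IntegrableOn (fun x => ρ x * F x) D := by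
    have h2 : (fun x => ρ x * F x) = fun x =>
        (ρ x * (F x - F c₀ - ⟪gradF c₀, x - c₀⟫)) + (F c₀ * ρ x)
          + (⟪gradF c₀, ρ x • x⟫ - ⟪gradF c₀, c₀⟫ * ρ x) := by
      funext x
      have := hexp c₀ x
      nlinarith [this]
    rw [h2]
    exact ((hDiv c₀ hc₀).add (hρint.const_mul _)).add ((hinn c₀).sub (hρint.const_mul _))
  -- key identity
  have hkey : ∀ c ∈ D, (∫ x in D, ρ x * (F x - F c - ⟪gradF c, x - c⟫)) =
      (∫ x in D, ρ x * F x) - (∫ x in D, ρ x) * F c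
        - ⟪gradF c, (∫ x in D, ρ x • x) - (∫ x in D, ρ x) • c⟫ := by
    intro c _
    have hsplit : ∀ x, ρ x * (F x - F c - ⟪gradF c, x - c⟫) =
        ρ x * F x - F c * ρ x - (⟪gradF c, ρ x • x⟫ - ⟪gradF c, c⟫ * ρ x) := by
      intro x
      have := hexp c x
      nlinarith [this]
    calc (∫ x in D, ρ x * (F x - F c - ⟪gradF c, x - c⟫))
        = ∫ x in D, (ρ x * F x - F c * ρ x - (⟪gradF c, ρ x • x⟫ - ⟪gradF c, c⟫ * ρ x)) := by
          exact integral_congr_ae (Filter.Eventually.of_forall fun x => hsplit x)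
      _ = (∫ x in D, ρ x * F x) - (∫ x in D, ρ x) * F c
            - ⟪gradF c, (∫ x in D, ρ x • x) - (∫ x in D, ρ x) • c⟫ := by
          have iA : IntegrableOn (fun x => ρ x * F x - F c * ρ x) D :=
            hG.sub (hρint.const_mul _)
          have iC : IntegrableOn (fun x => ⟪gradF c, ρ x • x⟫ - ⟪gradF c, c⟫ * ρ x) D :=
            (hinn c).sub (hρint.const_mul _)
          rw [integral_sub iA iC, integral_sub hG (hρint.const_mul _),
            integral_sub (hinn c) (hρint.const_mul _), integral_const_mul,
            integral_const_mul, hinnval c, inner_sub_right, real_inner_smul_right]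
          ring
  -- cstar is in D
  have hcD : cstar ∈ D := by
    set ν : Measure (EuclideanSpace ℝ (Fin d)) :=
      (volume.restrict D).withDensity (fun x => ENNReal.ofReal (ρ x)) with hν
    have hρm : AEMeasurable ρ (volume.restrict D) :=
      hρint.aestronglyMeasurable.aemeasurable
    have htoNN : AEMeasurable (fun x => (ρ x).toNNReal) (volume.restrict D) :=
      measurable_real_toNNReal.comp_aemeasurable hρm
    have hνuniv : ν Set.univ = ENNReal.ofReal (∫ x in D, ρ x) := by
      rw [hν, withDensity_apply _ MeasurableSet.univ, Measure.restrict_univ]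
      exact (ofReal_integral_eq_lintegral_ofReal hρint
        (Filter.Eventually.of_forall hρ)).symm
    haveI : IsFiniteMeasure ν := ⟨by rw [hνuniv]; exact ENNReal.ofReal_lt_top⟩
    haveI : NeZero ν := by
      refine ⟨fun h => ?_⟩
      have h0 : ν Set.univ = 0 := by rw [h]; simp
      rw [hνuniv] at h0
      exact absurd h0 (ENNReal.ofReal_pos.2 hmass).ne'
    have hνeq : ν = (volume.restrict D).withDensity
        (fun x => ((ρ x).toNNReal : ℝ≥0∞)) := rfl
    have hsmul : ∀ x : EuclideanSpace ℝ (Fin d), (ρ x).toNNReal • x = ρ x • x := by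
      intro x
      rw [NNReal.smul_def, Real.coe_toNNReal _ (hρ x)]
    have hint : Integrable (fun x => x) ν := by
      rw [hνeq, integrable_withDensity_iff_integrable_coe_smul₀ htoNN]
      exact hρxint.congr (Filter.Eventually.of_forall fun x => by
        show ρ x • x = ((ρ x).toNNReal : ℝ) • x
        rw [Real.coe_toNNReal _ (hρ x)])
    have hintegral : (∫ x, x ∂ν) = ∫ x in D, ρ x • x := by
      rw [hνeq, integral_withDensity_eq_integral_smul₀ htoNN]
      exact integral_congr_ae (Filter.Eventually.of_forall fun x => hsmul x)
    have hae : ∀ᵐ x ∂ν, x ∈ D :=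
      (ae_restrict_mem hDmeas).filter_mono (withDensity_absolutelyContinuous _ _).ae_le
    have hmem := hDconv.average_mem hDcomp.isClosed hae hint
    rw [average_eq, Measure.real, hνuniv, ENNReal.toReal_ofReal hmass.le, hintegral] at hmem
    rw [hcstar]
    exact hmem
  -- S = M • cstar
  have hS : (∫ x in D, ρ x • x) = (∫ x in D, ρ x) • cstar := by
    rw [hcstar, smul_smul, mul_inv_cancel₀ hMne, one_smul]
  -- value at cstar
  have hvalstar : (∫ x in D, ρ x * (F x - F cstar - ⟪gradF cstar, x - cstar⟫)) =
      (∫ x in D, ρ x * F x) - (∫ x in D, ρ x) * F cstar := by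
    rw [hkey cstar hcD, hS, sub_self, inner_zero_right, sub_zero]
  -- difference formula
  have hdiff : ∀ c ∈ D, (∫ x in D, ρ x * (F x - F c - ⟪gradF c, x - c⟫))
      - (∫ x in D, ρ x * (F x - F cstar - ⟪gradF cstar, x - cstar⟫))
      = (∫ x in D, ρ x) * (F cstar - (F c + ⟪gradF c, cstar - c⟫)) := by
    intro c hc
    rw [hkey c hc, hvalstar, hS, ← smul_sub, real_inner_smul_right]
    ring
  have hstrict : ∀ c ∈ D, c ≠ cstar →
      (∫ x in D, ρ x * (F x - F cstar - ⟪gradF cstar, x - cstar⟫))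
        < ∫ x in D, ρ x * (F x - F c - ⟪gradF c, x - c⟫) := by
    intro c hc hne
    have hb := breg_strict hXconv hF (hDX hc) (hDX hcD) (hgrad c (hDX hc)) (Ne.symm hne)
    have hpos : 0 < (∫ x in D, ρ x) * (F cstar - (F c + ⟪gradF c, cstar - c⟫)) :=
      mul_pos hmass (by linarith)
    have := hdiff c hc
    linarith
  refine ⟨hcD, ?_, hstrict⟩
  intro c hc
  by_cases h : c = cstar
  · subst h; exact le_refl _
  · exact (hstrict c hc h).le
end
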